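/- For every m ≥ 4, there exists a 1-uniform morphism σ : ℕ* → {a,b,c}* that is unambiguous with respect to the pattern α_m = 1·1·2·2·⋯·m·m. -/

import Mathlib

/-- Thue–Morse sequence -/
def tm (n : ℕ) : Bool := decide ((Nat.digits 2 n).sum % 2 = 1)

lemma tm_two_mul (n : ℕ) : tm (2 * n) = tm n := by
  rcases Nat.eq_zero_or_pos n with h | h
  · simp [h]
  · unfold tm
    rw [Nat.digits_def' (by norm_num : (1:ℕ) < 2) (by omega)]
    simp [Nat.mul_mod_right, Nat.mul_div_cancel_left _ (by norm_num : (0:ℕ) < 2)]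

lemma tm_two_mul_add_one (n : ℕ) : tm (2 * n + 1) = !tm n := by
  unfold tm
  rw [Nat.digits_def' (by norm_num : (1:ℕ) < 2) (by omega)]
  have h1 : (2 * n + 1) % 2 = 1 := by omega
  have h2 : (2 * n + 1) / 2 = n := by omega
  rw [h1, h2]
  rcases Nat.mod_two_eq_zero_or_one ((Nat.digits 2 n).sum) with h | h <;>
    simp [List.sum_cons, Nat.add_mod, h]

lemma tm_even_ne (a : ℕ) : tm (2 * a) ≠ tm (2 * a + 1) := by
  rw [tm_two_mul, tm_two_mul_add_one]
  cases tm a <;> simp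

lemma tm_congr {A B A' B' : ℕ} (hA : A = A') (hB : B = B') (h : tm A = tm B) :
    tm A' = tm B' := (congrArg tm hA).symm.trans (h.trans (congrArg tm hB))

lemma tm_div2 (n : ℕ) (h : n % 2 = 0) : tm n = tm (n / 2) := by
  obtain ⟨a, rfl⟩ : ∃ a, n = 2 * a := ⟨n / 2, by omega⟩
  rw [tm_two_mul]; congr 1; omega

lemma tm_div2' (n : ℕ) (h : n % 2 = 1) : tm n = !tm (n / 2) := by
  obtain ⟨a, rfl⟩ : ∃ a, n = 2 * a + 1 := ⟨n / 2, by omega⟩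
  rw [tm_two_mul_add_one]; congr 2; omega

lemma tm_ne_succ_of_even (n : ℕ) (h : n % 2 = 0) : tm n ≠ tm (n + 1) := by
  obtain ⟨a, rfl⟩ : ∃ a, n = 2 * a := ⟨n / 2, by omega⟩
  exact tm_even_ne a

lemma tm_eq_succ_of_mod4 (n : ℕ) (h : n % 4 = 1) : tm n = tm (n + 1) := by
  obtain ⟨m, rfl⟩ : ∃ m, n = 4 * m + 1 := ⟨n / 4, by omega⟩
  have h1 : 4 * m + 1 = 2 * (2 * m) + 1 := by ring
  have h2 : 4 * m + 1 + 1 = 2 * (2 * m + 1) := by ring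
  rw [h2, h1, tm_two_mul_add_one, tm_two_mul, tm_two_mul, tm_two_mul_add_one]

/-- Thue–Morse is overlap-free -/
lemma ofree : ∀ k, 0 < k → ∀ i, ¬ (∀ j ≤ k, tm (i + j) = tm (i + j + k)) := by
  intro k
  induction k using Nat.strong_induction_on with
  | _ k ih =>
    intro hk i H
    rcases Nat.even_or_odd k with ⟨k', hkk⟩ | hodd
    · -- even case: reduce to period k'
      have hk' : 0 < k' := by omega
      have hlt : k' < k := by omega
      rcases Nat.even_or_odd i with ⟨a, hia⟩ | ⟨a, hia⟩
      · refine ih k' hlt hk' a (fun j hj => ?_)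
        have h := H (2 * j) (by omega)
        rw [tm_div2 (i + 2 * j) (by omega), tm_div2 (i + 2 * j + k) (by omega)] at h
        exact tm_congr (by omega) (by omega) h
      · refine ih k' hlt hk' a (fun j hj => ?_)
        have h := H (2 * j) (by omega)
        rw [tm_div2' (i + 2 * j) (by omega), tm_div2' (i + 2 * j + k) (by omega)] at h
        exact tm_congr (by omega) (by omega) (Bool.not_inj h)
    · -- odd case
      rcases Nat.lt_or_ge k 3 with hk3 | hk3
      · -- k = 1
        have hk1 : k = 1 := by rcases hodd with ⟨c, hc⟩; omega
        subst hk1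
        rcases Nat.even_or_odd i with ⟨a, hia⟩ | ⟨a, hia⟩
        · exact tm_ne_succ_of_even i (by omega)
            (tm_congr (by omega) (by omega) (H 0 (by omega)))
        · exact tm_ne_succ_of_even (i + 1) (by omega)
            (tm_congr (by omega) (by omega) (H 1 (by omega)))
      · -- k odd, k ≥ 3
        have hk2 : k % 2 = 1 := Nat.odd_iff.mp hodd
        have hres : ∃ r, r ≤ 2 ∧ ((i + r) % 4 = 1 ∨ ((i + r) % 2 = 0 ∧ (i + r + k) % 4 = 1)) := by
          have h4i : i % 4 = 0 ∨ i % 4 = 1 ∨ i % 4 = 2 ∨ i % 4 = 3 := by omega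
          have h4k : k % 4 = 1 ∨ k % 4 = 3 := by rcases hodd with ⟨c, hc⟩; omega
          rcases h4k with hA | hA <;> rcases h4i with hB | hB | hB | hB
          · exact ⟨0, by omega, Or.inr ⟨by omega, by omega⟩⟩
          · exact ⟨0, by omega, Or.inl (by omega)⟩
          · exact ⟨2, by omega, Or.inr ⟨by omega, by omega⟩⟩
          · exact ⟨2, by omega, Or.inl (by omega)⟩
          · exact ⟨1, by omega, Or.inl (by omega)⟩
          · exact ⟨0, by omega, Or.inl (by omega)⟩
          · exact ⟨0, by omega, Or.inr ⟨by omega, by omega⟩⟩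
          · exact ⟨2, by omega, Or.inl (by omega)⟩
        obtain ⟨r, hr2, hcond⟩ := hres
        have h1 : tm (i + r) = tm (i + r + k) := H r (by omega)
        have h2 : tm (i + r + 1) = tm (i + r + k + 1) :=
          tm_congr (by omega) (by omega) (H (r + 1) (by omega))
        rcases hcond with hy | ⟨heven, hy⟩
        · exact tm_ne_succ_of_even (i + r + k) (by omega)
            (h1.symm.trans ((tm_eq_succ_of_mod4 (i + r) hy).trans h2))
        · exact tm_ne_succ_of_even (i + r) heven
            (h1.trans ((tm_eq_succ_of_mod4 (i + r + k) hy).trans h2.symm))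

/-- the square-free ternary word: difference coding of Thue–Morse -/
def sw (n : ℕ) : Fin 3 :=
  match tm n, tm (n + 1) with
  | false, true => 1
  | true, false => 2
  | _, _ => 0

lemma sw_step (a b : ℕ) (h : sw a = sw b) : tm a = tm b ↔ tm (a + 1) = tm (b + 1) := by
  unfold sw at h
  cases h1 : tm a <;> cases h2 : tm (a + 1) <;> cases h3 : tm b <;> cases h4 : tm (b + 1) <;>
    simp_all

lemma sw_zero (a b : ℕ) (h : sw a = sw b) (hne : tm a ≠ tm b) : tm a = tm (a + 1) := by
  unfold sw at h
  cases h1 : tm a <;> cases h2 : tm (a + 1) <;> cases h3 : tm b <;> cases h4 : tm (b + 1) <;>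
    simp_all

/-- the ternary word is square-free -/
lemma sf : ∀ k, 0 < k → ∀ i, ¬ (∀ j < k, sw (i + j) = sw (i + j + k)) := by
  intro k hk i H
  by_cases hex : ∃ j, j < k ∧ tm (i + j) = tm (i + j + k)
  · -- propagate equality to the whole window: overlap in tm
    obtain ⟨j0, hj0, hP0⟩ := hex
    have iff_chain : ∀ j < k, (tm (i + j) = tm (i + j + k) ↔ tm (i + j + 1) = tm (i + j + 1 + k)) := by
      intro j hj
      have := sw_step (i + j) (i + j + k) (H j hj)
      constructor
      · intro h; have := this.mp h
        exact (congrArg tm (by omega : i + j + 1 = i + j + 1)).symm.trans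
          (this.trans (congrArg tm (by omega : i + j + k + 1 = i + j + 1 + k)))
      · intro h; exact this.mpr ((congrArg tm rfl).trans
          (h.trans (congrArg tm (by omega : i + j + 1 + k = i + j + k + 1))))
    have all : ∀ j ≤ k, tm (i + j) = tm (i + j + k) := by
      -- first: relation between P j and P j0 for all j
      have up : ∀ d, j0 + d ≤ k → tm (i + (j0 + d)) = tm (i + (j0 + d) + k) := by
        intro d
        induction d with
        | zero => intro _; exact hP0
        | succ n ihn =>
          intro hle
          have h1 := ihn (by omega)
          have h2 := (iff_chain (j0 + n) (by omega)).mp h1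
          exact (congrArg tm (by omega : i + (j0 + (n+1)) = i + (j0 + n) + 1)).trans
            (h2.trans (congrArg tm (by omega : i + (j0 + n) + 1 + k = i + (j0 + (n+1)) + k)))
      have down : ∀ d, d ≤ j0 → tm (i + (j0 - d)) = tm (i + (j0 - d) + k) := by
        intro d
        induction d with
        | zero => intro _; exact hP0
        | succ n ihn =>
          intro hle
          have h1 := ihn (by omega)
          have h2 := (iff_chain (j0 - (n+1)) (by omega)).mpr
            ((congrArg tm (by omega : i + (j0 - (n+1)) + 1 = i + (j0 - n))).trans
              (h1.trans (congrArg tm (by omega : i + (j0 - n) + k = i + (j0 - (n+1)) + 1 + k))))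
          exact h2
      intro j hj
      rcases le_or_gt j0 j with hle | hlt
      · have := up (j - j0) (by omega)
        exact (congrArg tm (by omega : i + j = i + (j0 + (j - j0)))).trans
          (this.trans (congrArg tm (by omega : i + (j0 + (j - j0)) + k = i + j + k)))
      · have := down (j0 - j) (by omega)
        exact (congrArg tm (by omega : i + j = i + (j0 - (j0 - j)))).trans
          (this.trans (congrArg tm (by omega : i + (j0 - (j0 - j)) + k = i + j + k)))
    exact ofree k hk i all
  · -- all unequal: tm constant on a window of length ≥ 2 → period-1 overlap
    push_neg at hex
    rcases Nat.lt_or_ge 1 k with hk2 | hk2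
    · have h0 : tm (i + 0) = tm (i + 0 + 1) :=
        sw_zero (i + 0) (i + 0 + k) (H 0 hk) (hex 0 hk)
      have h1 : tm (i + 1) = tm (i + 1 + 1) :=
        sw_zero (i + 1) (i + 1 + k) (H 1 hk2) (hex 1 hk2)
      exact ofree 1 (by omega) i (by
        intro j hj
        interval_cases j
        · exact h0
        · exact h1)
    · have hk1 : k = 1 := by omega
      subst hk1
      exact hex 0 (by omega)
        (sw_zero (i + 0) (i + 0 + 1) (H 0 (by omega)) (hex 0 (by omega)))

lemma sw_congr {A B A' B' : ℕ} (hA : A = A') (hB : B = B') (h : sw A = sw B) :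
    sw A' = sw B' := (congrArg sw hA).symm.trans (h.trans (congrArg sw hB))

/-- the doubled word n ↦ sw (n / 2) has no square of period ≥ 2 -/
lemma nsq (L : ℕ) (hL : 2 ≤ L) (p : ℕ)
    (H : ∀ r < L, sw ((p + r) / 2) = sw ((p + L + r) / 2)) : False := by
  rcases Nat.even_or_odd L with ⟨L', hLL⟩ | hodd
  · -- L = 2 L'
    refine sf L' (by omega) ((p + 1) / 2) (fun j hj => ?_)
    have h := H (2 * ((p + 1) / 2 + j) - p) (by omega)
    exact sw_congr (by omega) (by omega) h
  · -- L odd ≥ 3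
    have hL3 : 3 ≤ L := by rcases hodd with ⟨c, hc⟩; omega
    have hL2 : L % 2 = 1 := Nat.odd_iff.mp hodd
    -- r with p + r even
    set r := p % 2 with hr
    have h1 := H r (by omega)
    have h2 := H (r + 1) (by omega)
    -- p + r even, (p+r)/2 = (p+r+1)/2 ; p + L + r odd
    have e1 : (p + r) / 2 = (p + r + 1) / 2 := by omega
    have key : sw ((p + L + r) / 2) = sw ((p + L + r) / 2 + 1) := by
      have h1' : sw ((p + (r + 1)) / 2) = sw ((p + L + r) / 2) :=
        sw_congr (by omega) (by omega) h1
      exact (h1'.symm.trans h2).trans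
        (congrArg sw (by omega : (p + L + (r + 1)) / 2 = (p + L + r) / 2 + 1))
    exact sf 1 (by omega) ((p + L + r) / 2) (fun j hj => by
      have hj0 : j = 0 := by omega
      subst hj0
      exact sw_congr (by omega) (by omega) key)

-- list helper lemmas

lemma flat_pattern {A : Type*} (m : ℕ) (g : ℕ → List A) :
    ((List.range m).flatMap (fun i => [i + 1, i + 1])).flatMap g
      = (List.range m).flatMap (fun i => g (i + 1) ++ g (i + 1)) := by
  rw [List.flatMap_assoc]
  congr 1
  funext i
  simp [List.flatMap]

lemma double_word (m : ℕ) :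
    (List.range m).flatMap (fun i => [sw i, sw i])
      = (List.range (2 * m)).map (fun n => sw (n / 2)) := by
  induction m with
  | zero => simp
  | succ n ih =>
    rw [List.range_succ, List.flatMap_append, ih,
      show 2 * (n + 1) = (2 * n) + 1 + 1 from by ring,
      List.range_succ, List.range_succ]
    simp only [List.map_append, List.append_assoc]
    congr 1
    simp only [List.flatMap_cons, List.flatMap_nil, List.map_cons, List.map_nil]
    have e1 : (2 * n) / 2 = n := by omega
    have e2 : (2 * n + 1) / 2 = n := by omega
    rw [e1, e2]
    rfl

lemma sum_eq_two (f : ℕ → ℕ) : ∀ l : List ℕ, (∀ x ∈ l, f x ≤ 2) →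
    (l.map f).sum = 2 * l.length → ∀ x ∈ l, f x = 2 := by
  intro l
  induction l with
  | nil => simp
  | cons a l ih =>
    intro hle hsum x hx
    have hsum_le : ∀ l' : List ℕ, (∀ x ∈ l', f x ≤ 2) → (l'.map f).sum ≤ 2 * l'.length := by
      intro l'
      induction l' with
      | nil => simp
      | cons b l'' ih' =>
        intro h
        simp only [List.map_cons, List.sum_cons, List.length_cons]
        have := ih' (fun y hy => h y (by simp [hy]))
        have := h b (by simp)
        omega
    simp only [List.map_cons, List.sum_cons, List.length_cons] at hsum
    have hta : f a ≤ 2 := hle a (by simp)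
    have htl := hsum_le l (fun y hy => hle y (by simp [hy]))
    rcases List.mem_cons.mp hx with rfl | hx'
    · omega
    · exact ih (fun y hy => hle y (by simp [hy])) (by omega) x hx'

lemma flat_eq {A : Type*} (F G : ℕ → List A) : ∀ l : List ℕ,
    (∀ x ∈ l, (F x).length = (G x).length) → l.flatMap F = l.flatMap G →
    ∀ x ∈ l, F x = G x := by
  intro l
  induction l with
  | nil => simp
  | cons a l ih =>
    intro hlen heq x hx
    simp only [List.flatMap_cons] at heq
    obtain ⟨h1, h2⟩ := List.append_inj heq (hlen a (by simp))
    rcases List.mem_cons.mp hx with rfl | hx'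
    · exact h1
    · exact ih (fun y hy => hlen y (by simp [hy])) h2 x hx'


/-- For every m ≥ 4 there is a 1-uniform morphism σ : ℕ* → {a,b,c}*
(target alphabet `Fin 3`) that is unambiguous with respect to the pattern
α_m = 1·1·2·2·⋯·m·m. -/
theorem stmt_4 (m : ℕ) (hm : 4 ≤ m) :
    let α : List ℕ := (List.range m).flatMap (fun i => [i + 1, i + 1])
    ∃ σ : ℕ → List (Fin 3), (∀ x, (σ x).length = 1) ∧
      ∀ τ : ℕ → List (Fin 3),
        α.flatMap τ = α.flatMap σ → ∀ x ∈ α, τ x = σ x := by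
  intro α
  refine ⟨fun x => [sw (x - 1)], fun x => rfl, ?_⟩
  intro τ hτ x hx
  have hα : α = (List.range m).flatMap (fun i => [i + 1, i + 1]) := rfl
  set wlist : List (Fin 3) := (List.range (2 * m)).map (fun n => sw (n / 2)) with hwl
  -- the image word
  have hw : α.flatMap (fun x => [sw (x - 1)]) = wlist := by
    rw [hα, flat_pattern]
    have he : (fun i => (fun x => [sw (x - 1)]) (i + 1) ++ (fun x => [sw (x - 1)]) (i + 1))
        = fun i => [sw i, sw i] := by
      funext i; simp
    rw [he, double_word]
  set gτ : ℕ → List (Fin 3) := fun i => τ (i + 1) ++ τ (i + 1) with hgτ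
  have hτw : (List.range m).flatMap gτ = wlist := by
    rw [← flat_pattern, ← hα, hτ, hw]
  have hwlen : wlist.length = 2 * m := by simp [hwl]
  -- step 1 : each τ (i+1) has length ≤ 1
  have step1 : ∀ i < m, (τ (i + 1)).length ≤ 1 := by
    intro i him
    by_contra hlen
    push_neg at hlen
    -- decompose range m around position i
    have hrange : List.range m = (List.range i ++ [i]) ++
        (List.range (m - i - 1)).map (fun x => (i + 1) + x) := by
      rw [← List.range_succ, ← List.range_add]
      congr 1
      omega
    set A : List (Fin 3) := (List.range i).flatMap gτ with hA
    set u : List (Fin 3) := τ (i + 1) with hu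
    set B : List (Fin 3) := ((List.range (m - i - 1)).map (fun x => (i + 1) + x)).flatMap gτ
      with hB
    have hdecomp : wlist = A ++ (u ++ (u ++ B)) := by
      rw [← hτw, hrange, List.flatMap_append, List.flatMap_append]
      simp only [List.flatMap_cons, List.flatMap_nil, List.append_nil, List.append_assoc]
      show A ++ ((u ++ u) ++ B) = A ++ (u ++ (u ++ B))
      rw [List.append_assoc]
    set p := A.length with hp
    set L := u.length with hL
    have hlen2 : 2 * m = p + (L + (L + B.length)) := by
      rw [← hwlen, hdecomp]; simp; rfl
    refine nsq L hlen p (fun r hr => ?_)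
    have key : ∀ q : ℕ, q < 2 * m → wlist[q]? = some (sw (q / 2)) := by
      intro q hq
      rw [hwl, List.getElem?_map, List.getElem?_range hq, Option.map_some]
    have k1 : wlist[p + r]? = some (sw ((p + r) / 2)) := key _ (by omega)
    have k2 : wlist[p + L + r]? = some (sw ((p + L + r) / 2)) := key _ (by omega)
    have k1' : wlist[p + r]? = u[r]? := by
      rw [hdecomp, List.getElem?_append_right (by omega : A.length ≤ p + r),
        List.getElem?_append_left (by simp only [← hp]; omega : p + r - A.length < u.length)]
      congr 1
      omega
    have k2' : wlist[p + L + r]? = u[r]? := by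
      rw [hdecomp, List.getElem?_append_right (by omega : A.length ≤ p + L + r)]
      have e1 : p + L + r - A.length = L + r := by omega
      rw [e1, List.getElem?_append_right (by omega : u.length ≤ L + r),
        List.getElem?_append_left (by omega : L + r - u.length < u.length)]
      congr 1
      omega
    have : some (sw ((p + r) / 2)) = some (sw ((p + L + r) / 2)) := by
      rw [← k1, ← k2, k1', k2']
    exact Option.some.inj this
  -- step 2 : each τ (i+1) has length exactly 1
  have hsum : ((List.range m).map (fun i => (gτ i).length)).sum = 2 * m := by
    have := congrArg List.length hτw
    rw [List.length_flatMap, hwlen] at this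
    simpa using this
  have step2 : ∀ i ∈ List.range m, (gτ i).length = 2 := by
    refine sum_eq_two _ _ (fun x hx' => ?_) (by rw [hsum]; simp)
    have : x < m := List.mem_range.mp hx'
    have := step1 x this
    simp only [hgτ, List.length_append]
    omega
  -- step 3 : blocks coincide
  have step3 : ∀ i ∈ List.range m, gτ i = [sw i, sw i] := by
    refine flat_eq _ _ _ (fun x hx' => ?_) (by rw [hτw, hwl, ← double_word]) 
    rw [step2 x hx']
    rfl
  -- conclude
  rw [hα] at hx
  rw [List.mem_flatMap] at hx
  obtain ⟨i, hi, hxi⟩ := hx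
  have hxe : x = i + 1 := by
    simp only [List.mem_cons, List.not_mem_nil, or_false] at hxi
    rcases hxi with h | h <;> exact h
  subst hxe
  have hblock := step3 i hi
  have hl1 : (τ (i + 1)).length = 1 := by
    have := step2 i hi
    simp only [hgτ, List.length_append] at this
    omega
  obtain ⟨c, hc⟩ := List.length_eq_one_iff.mp hl1
  simp only [hgτ, hc] at hblock
  have : c = sw i := by
    have := congrArg (fun l => l[0]?) hblock
    simpa using this
  rw [hc, this]
  simp
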